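/- Let (X,d) be a finite metric space with weight function w: X → ℝ⁺, let Δ satisfy 0 < Δ ≤ diam(X)/2, and let t ≥ 2 be an integer. Then there exists a point v ∈ X and an index 1 ≤ i ≤ t such that, setting Q = B(v,(1+i/t)Δ/4) and P = B(v,(1+(i-1)/t)Δ/4), one has w(Q_i) ≤ w(Q_{i-1})·(w(B(v,Δ/2))/w(B(v,Δ/4)))^{1/t}, i.e. w(P) ≥ w(Q)·(w(B(v,Δ/2))/w(B(v,Δ/4)))^{-1/t}. -/

import Mathlib

open Finset

/-- pigeonhole over annuli in the Ramsey decomposition. -/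
theorem stmt_0 {X : Type*} [MetricSpace X] [Fintype X] [Nonempty X]
    (w : X → ℝ) (hw : ∀ x, 0 < w x)
    (Δ : ℝ) (hΔ : 0 < Δ) (hΔ2 : Δ ≤ Metric.diam (Set.univ : Set X) / 2)
    (t : ℕ) (ht : 2 ≤ t) :
    ∃ (v : X) (i : ℕ), 1 ≤ i ∧ i ≤ t ∧
      (∑ u ∈ Finset.univ.filter (fun u => dist u v ≤ (1 + (i : ℝ) / t) * Δ / 4), w u)
        ≤ (∑ u ∈ Finset.univ.filter (fun u => dist u v ≤ (1 + ((i : ℝ) - 1) / t) * Δ / 4), w u)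
          * ((∑ u ∈ Finset.univ.filter (fun u => dist u v ≤ Δ / 2), w u)
            / (∑ u ∈ Finset.univ.filter (fun u => dist u v ≤ Δ / 4), w u)) ^ ((1 : ℝ) / t) := by
  by_contra h
  push_neg at h
  obtain ⟨v⟩ := (inferInstance : Nonempty X)
  have ht0 : (t : ℝ) ≠ 0 := by positivity
  set g : ℕ → ℝ := fun i => ∑ u ∈ Finset.univ.filter
      (fun u => dist u v ≤ (1 + (i : ℝ) / t) * Δ / 4), w u with hg
  have hgpos : ∀ i, 0 < g i := by
    intro i
    apply Finset.sum_pos (fun u _ => hw u)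
    refine ⟨v, ?_⟩
    simp only [mem_filter, mem_univ, dist_self, true_and]
    positivity
  have e2 : Δ / 2 = (1 + (t : ℝ) / t) * Δ / 4 := by field_simp; ring
  have e0 : Δ / 4 = (1 + (0 : ℝ) / t) * Δ / 4 := by rw [zero_div, add_zero, one_mul]
  set R : ℝ := g t / g 0 with hR
  have hR0 : 0 < R := div_pos (hgpos t) (hgpos 0)
  have key : ∀ i ∈ Finset.range t, g i * R ^ ((1 : ℝ) / t) < g (i + 1) := by
    intro i hi
    have hi' := Finset.mem_range.mp hi
    have := h v (i + 1) (by omega) (by omega)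
    push_cast at this
    simp only [add_sub_cancel_right] at this
    simp only [hg, hR]
    push_cast
    simp only [e2, e0] at this
    exact this
  have tele : ∀ n : ℕ, ∏ i ∈ Finset.range n, g (i + 1) / g i = g n / g 0 := by
    intro n
    induction n with
    | zero => simp [div_self (hgpos 0).ne']
    | succ n ih =>
      rw [Finset.prod_range_succ, ih, div_mul_div_comm,
        mul_comm (g n) (g (n + 1)), mul_div_mul_right _ _ (hgpos n).ne']
  have h1 : ∏ _i ∈ Finset.range t, R ^ ((1 : ℝ) / t)
      < ∏ i ∈ Finset.range t, g (i + 1) / g i := by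
    apply Finset.prod_lt_prod_of_nonempty
    · intro i _; positivity
    · intro i hi
      rw [lt_div_iff₀ (hgpos i), mul_comm]
      exact key i hi
    · exact Finset.nonempty_range_iff.mpr (by omega)
  have h2 : ∏ _i ∈ Finset.range t, R ^ ((1 : ℝ) / t) = R := by
    rw [Finset.prod_const, Finset.card_range, ← Real.rpow_natCast (R ^ ((1 : ℝ) / t)) t,
      ← Real.rpow_mul hR0.le, one_div, inv_mul_cancel₀ ht0, Real.rpow_one]
  rw [h2, tele t] at h1
  exact lt_irrefl _ h1
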